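/- Let R be a commutative ring, G an additive commutative group, M' an additive submonoid of G, and u ∈ M'. Let M'' be the additive submonoid {x : G | ∃ k : ℕ, x + k • u ∈ M'} of G. Then there is an R-algebra isomorphism between AddMonoidAlgebra R M'' and the localization of AddMonoidAlgebra R M' away from the element AddMonoidAlgebra.single ⟨u, _⟩ (1 : R) (i.e., Localization.Away of the monomial χ^u). -/

import Mathlib

/-- Inverting the monomial `χ^u` in the monoid algebra `R[M']` yields the monoid
algebra of the submonoid `M'' = {x | ∃ k, x + k • u ∈ M'}`. -/
theorem addMonoidAlgebra_localization_away_single (R : Type*) [CommRing R]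
    (G : Type*) [AddCommGroup G] (M' : AddSubmonoid G) (u : G) (hu : u ∈ M')
    (M'' : AddSubmonoid G)
    (hM'' : ∀ x : G, x ∈ M'' ↔ ∃ k : ℕ, x + k • u ∈ M') :
    Nonempty (AddMonoidAlgebra R M'' ≃ₐ[R]
      Localization.Away (AddMonoidAlgebra.single (⟨u, hu⟩ : M') (1 : R))) := by
  classical
  have hle : M' ≤ M'' := fun x hx => (hM'' x).2 ⟨0, by simpa using hx⟩
  set s : AddMonoidAlgebra R M' := AddMonoidAlgebra.single (⟨u, hu⟩ : M') 1 with hs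
  let ι : M' →+ M'' := AddSubmonoid.inclusion hle
  have hι : Function.Injective ι := fun a b h => by have h2 := congrArg Subtype.val h; exact Subtype.ext h2
  let f : AddMonoidAlgebra R M' →ₐ[R] AddMonoidAlgebra R M'' :=
    AddMonoidAlgebra.mapDomainAlgHom R R ι
  have hfinj : Function.Injective f := AddMonoidAlgebra.mapDomain_injective hι
  have hfs : ∀ (a : M') (r : R), f (AddMonoidAlgebra.single a r)
      = AddMonoidAlgebra.single (ι a) r := fun a r => AddMonoidAlgebra.mapDomain_single
  letI : Algebra (AddMonoidAlgebra R M') (AddMonoidAlgebra R M'') := f.toRingHom.toAlgebra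
  haveI : IsScalarTower R (AddMonoidAlgebra R M') (AddMonoidAlgebra R M'') :=
    IsScalarTower.of_algebraMap_eq' f.comp_algebraMap.symm
  have hf : ∀ x, algebraMap (AddMonoidAlgebra R M') (AddMonoidAlgebra R M'') x = f x :=
    fun _ => rfl
  -- s maps to a unit
  have hmu : -u ∈ M'' := (hM'' (-u)).2 ⟨1, by simpa using (AddSubmonoid.zero_mem M')⟩
  have hunit : IsUnit (f s) := by
    refine IsUnit.of_mul_eq_one (AddMonoidAlgebra.single (⟨-u, hmu⟩ : M'') 1) ?_
    rw [hs, hfs, AddMonoidAlgebra.single_mul_single, one_mul]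
    have : ι ⟨u, hu⟩ + ⟨-u, hmu⟩ = 0 := Subtype.ext (add_neg_cancel u)
    rw [this]
    rfl
  -- surjectivity lemma
  have hsk : ∀ k : ℕ, s ^ k = AddMonoidAlgebra.single (⟨k • u, AddSubmonoid.nsmul_mem M' hu k⟩ : M') 1 := by
    intro k
    rw [hs, AddMonoidAlgebra.single_pow, one_pow]
    congr 1
  have key : ∀ z : AddMonoidAlgebra R M'', ∃ (k : ℕ) (x : AddMonoidAlgebra R M'),
      z * f (s ^ k) = f x := by
    intro z
    induction z using AddMonoidAlgebra.induction with
    | zero => exact ⟨0, 0, by simp⟩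
    | single_add a r zf _ _ ih =>
      obtain ⟨k1, x1, h1⟩ := ih
      obtain ⟨k2, hk2⟩ := (hM'' a.1).1 a.2
      refine ⟨k2 + k1, AddMonoidAlgebra.single (⟨a.1 + k2 • u, hk2⟩ : M') r * s ^ k1
        + x1 * s ^ k2, ?_⟩
      have hstep : (AddMonoidAlgebra.single a r : AddMonoidAlgebra R M'') * f (s ^ k2)
          = f (AddMonoidAlgebra.single (⟨a.1 + k2 • u, hk2⟩ : M') r) := by
        rw [hsk k2, hfs, hfs, AddMonoidAlgebra.single_mul_single, mul_one]
        congr 1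
      rw [map_add, map_mul, map_mul, pow_add, map_mul, ← hstep, ← h1]; ring
  haveI : IsLocalization.Away s (AddMonoidAlgebra R M'') :=
    { map_units := by
        rintro ⟨y, n, rfl⟩
        rw [hf, map_pow]
        exact hunit.pow n
      surj := by
        intro z
        obtain ⟨k, x, hx⟩ := key z
        exact ⟨(x, ⟨s ^ k, k, rfl⟩), by rw [hf, hf]; exact hx⟩
      exists_of_eq := by
        intro a b h
        rw [hf, hf] at h
        exact ⟨1, by rw [hfinj h]⟩ }
  exact ⟨((IsLocalization.algEquiv (Submonoid.powers s) (Localization.Away s)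
    (AddMonoidAlgebra R M'')).restrictScalars R).symm⟩
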